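/- arXiv:0901.1175 — 3 statements merged into one kernel-verified Lean document; each statement's English description precedes it below -/
import Mathlib

section
/- Let π, ρ ∈ NCL(n) be such that π̂ = ρ̂ and π̌ = ρ̌. Then π = ρ. -/
open scoped Classical

/-- The minimum of a finset of naturals (`0` if empty). -/
noncomputable def fmin (A : Finset ℕ) : ℕ := sInf (A : Set ℕ)

/-- The maximum of a finset of naturals (`0` if empty). -/
noncomputable def fmax (A : Finset ℕ) : ℕ := sSup (A : Set ℕ)

/-- `α` is a partition of the finite set `F ⊆ ℕ`. -/
def IsPartitionOfSet (F : Finset ℕ) (α : Finset (Finset ℕ)) : Prop :=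
  (∀ V ∈ α, V.Nonempty) ∧ (∀ V ∈ α, V ⊆ F) ∧ (∀ m ∈ F, ∃ V ∈ α, m ∈ V) ∧
    ∀ V ∈ α, ∀ W ∈ α, V ≠ W → V ∩ W = ∅

/-- `α` is a partition of `{1,…,n}`. -/
def IsPartitionOf (n : ℕ) (α : Finset (Finset ℕ)) : Prop :=
  IsPartitionOfSet (Finset.Icc 1 n) α

/-- Two distinct blocks of the family `π` cross: there are `a < b < c < d` with
`a, c` in one block and `b, d` in a different block. -/
def IsCrossing (π : Finset (Finset ℕ)) : Prop :=
  ∃ A ∈ π, ∃ B ∈ π, A ≠ B ∧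
    ∃ a ∈ A, ∃ b ∈ B, ∃ c ∈ A, ∃ d ∈ B, a < b ∧ b < c ∧ c < d

/-- `α ∈ NC(n)`: a non-crossing partition of `{1,…,n}`. -/
def IsNCPartition (n : ℕ) (α : Finset (Finset ℕ)) : Prop :=
  IsPartitionOf n α ∧ ¬ IsCrossing α

/-- Reverse refinement order `α ≤ β`: every block of `α` is contained in a block of `β`
(equivalently, every block of `β` is a union of blocks of `α`). -/
def Refines (α β : Finset (Finset ℕ)) : Prop := ∀ V ∈ α, ∃ W ∈ β, V ⊆ W

/-- The partial order `α ≪ β`: `α ≤ β` and for every block `W` of `β` there is a block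
`V` of `α` containing both `min W` and `max W`. -/
def LL (α β : Finset (Finset ℕ)) : Prop :=
  Refines α β ∧ ∀ W ∈ β, ∃ V ∈ α, fmin W ∈ V ∧ fmax W ∈ V

/-- A block `V` (of `α`) is `β`-special: some block `W` of `β` has the same min and max. -/
def SpecialBlock (β : Finset (Finset ℕ)) (V : Finset ℕ) : Prop :=
  ∃ W ∈ β, fmin V = fmin W ∧ fmax V = fmax W

/-- `V` is an outer block of `α`: no block of `α` strictly nests around it. -/
def OuterBlock (α : Finset (Finset ℕ)) (V : Finset ℕ) : Prop :=
  ∀ V' ∈ α, ¬ (fmin V' < fmin V ∧ fmax V < fmax V')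

/-- `π` is a linked partition of the finite set `F ⊆ ℕ`. -/
def IsLinkedPartitionOfSet (F : Finset ℕ) (π : Finset (Finset ℕ)) : Prop :=
  (∀ A ∈ π, A.Nonempty) ∧ (∀ A ∈ π, A ⊆ F) ∧ (∀ m ∈ F, ∃ A ∈ π, m ∈ A) ∧
    ∀ A ∈ π, ∀ B ∈ π, A ≠ B →
      A ∩ B = ∅ ∨
        (2 ≤ A.card ∧ 2 ≤ B.card ∧ (A ∩ B).card = 1 ∧ fmin A ≠ fmin B ∧
          ∀ x ∈ A ∩ B, x = fmin A ∨ x = fmin B)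

/-- `π ∈ NCL(F)`: a non-crossing linked partition of the finite set `F`. -/
def IsNCLOfSet (F : Finset ℕ) (π : Finset (Finset ℕ)) : Prop :=
  IsLinkedPartitionOfSet F π ∧ ¬ IsCrossing π

/-- `π ∈ NCL(n)`: a non-crossing linked partition of `{1,…,n}`. -/
def IsNCL (n : ℕ) (π : Finset (Finset ℕ)) : Prop :=
  IsNCLOfSet (Finset.Icc 1 n) π

/-- The number of blocks of `π` containing `m`. -/
noncomputable def coverCount (π : Finset (Finset ℕ)) (m : ℕ) : ℕ :=
  (π.filter fun A => m ∈ A).card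

/-- `m` is singly-covered by `π`: it lies in exactly one block. -/
def SinglyCovered (π : Finset (Finset ℕ)) (m : ℕ) : Prop := coverCount π m = 1

/-- `m` is doubly-covered by `π`: it lies in exactly two blocks. -/
def DoublyCovered (π : Finset (Finset ℕ)) (m : ℕ) : Prop := coverCount π m = 2

/-- The partition `π̂` generated by the blocks of `π`: its blocks are the connected
components of the ground set under the relation of lying in a common block of `π`. -/
noncomputable def genPart (π : Finset (Finset ℕ)) : Finset (Finset ℕ) :=
  (π.sup id).image fun m =>
    (π.sup id).filter fun x =>
      Relation.EqvGen (fun a b => ∃ A ∈ π, a ∈ A ∧ b ∈ A) m x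

/-- The unlinking `π̌` of a linked partition `π`. -/
noncomputable def unlink (π : Finset (Finset ℕ)) : Finset (Finset ℕ) :=
  π.image fun A => if SinglyCovered π (fmin A) then A else A.erase (fmin A)

/-- The block of `α` containing `m` (empty if there is none). -/
noncomputable def blockOf (α : Finset (Finset ℕ)) (m : ℕ) : Finset ℕ :=
  (α.filter fun V => m ∈ V).sup id

/-- The successor of `m` in the cycle on the block `V` (elements in increasing order). -/
noncomputable def nextInBlock (V : Finset ℕ) (m : ℕ) : ℕ :=
  if m = fmax V then fmin V else fmin (V.filter fun x => m < x)

/-- The predecessor of `m` in the cycle on the block `V`. -/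
noncomputable def prevInBlock (V : Finset ℕ) (m : ℕ) : ℕ :=
  if m = fmin V then fmax V else fmax (V.filter fun x => x < m)

/-- The permutation `P_α` associated to a partition `α`, as a function: each block
`{i₁ < i₂ < ⋯ < iₘ}` becomes the cycle `i₁ ↦ i₂ ↦ ⋯ ↦ iₘ ↦ i₁`. -/
noncomputable def permOf (α : Finset (Finset ℕ)) (m : ℕ) : ℕ :=
  if m ∈ blockOf α m then nextInBlock (blockOf α m) m else m

/-- The inverse permutation `P_α⁻¹`, as a function. -/
noncomputable def permOfInv (α : Finset (Finset ℕ)) (m : ℕ) : ℕ :=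
  if m ∈ blockOf α m then prevInBlock (blockOf α m) m else m

/-- The action `τ·α` of a map `τ` on a partition `α = {V₁,…,V_p}`, giving
`{τ(V₁),…,τ(V_p)}`. -/
def mapPart (τ : ℕ → ℕ) (α : Finset (Finset ℕ)) : Finset (Finset ℕ) :=
  α.image fun V => V.image τ

/-- The cycled unlinking `π° := P_{π̂}⁻¹ · π̌`. -/
noncomputable def cycUnlink (π : Finset (Finset ℕ)) : Finset (Finset ℕ) :=
  mapPart (permOfInv (genPart π)) (unlink π)

/-- `NC(n)` as a finset. -/
noncomputable def NCF (n : ℕ) : Finset (Finset (Finset ℕ)) :=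
  ((Finset.Icc 1 n).powerset.powerset).filter (IsNCPartition n)

/-- `NCL(n)` as a finset. -/
noncomputable def NCLF (n : ℕ) : Finset (Finset (Finset ℕ)) :=
  ((Finset.Icc 1 n).powerset.powerset).filter (IsNCL n)

/-- The restriction `π|_E`: the blocks of `π` contained in `E`. -/
def restrictL (π : Finset (Finset ℕ)) (E : Finset ℕ) : Finset (Finset ℕ) :=
  π.filter fun A => A ⊆ E

/-- The partition `β₀` obtained from `β` by leaving blocks of size `≤ 2` intact and
breaking each block `W` with `|W| ≥ 3` into the doubleton `{min W, max W}` together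
with `|W| - 2` singletons. -/
noncomputable def breakBlocks (β : Finset (Finset ℕ)) : Finset (Finset ℕ) :=
  β.biUnion fun W =>
    if W.card ≤ 2 then {W}
    else insert {fmin W, fmax W} ((W \ {fmin W, fmax W}).image fun x => ({x} : Finset ℕ))

namespace Stmt3Aux

open Finset

/-! ### fmin / fmax basics -/

lemma fmin_mem {A : Finset ℕ} (h : A.Nonempty) : fmin A ∈ A := by
  have h' : (A : Set ℕ).Nonempty := by exact_mod_cast h
  exact_mod_cast Nat.sInf_mem h'

lemma fmin_le {A : Finset ℕ} {x : ℕ} (h : x ∈ A) : fmin A ≤ x :=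
  Nat.sInf_le (by exact_mod_cast h)

lemma fmax_mem {A : Finset ℕ} (h : A.Nonempty) : fmax A ∈ A := by
  have h' : (A : Set ℕ).Nonempty := by exact_mod_cast h
  have := Nat.sSup_mem h' A.bddAbove
  exact_mod_cast this

lemma le_fmax {A : Finset ℕ} {x : ℕ} (h : x ∈ A) : x ≤ fmax A :=
  le_csSup A.bddAbove (by exact_mod_cast h)

lemma fmin_eq {A : Finset ℕ} {x : ℕ} (hx : x ∈ A) (h : ∀ y ∈ A, x ≤ y) : fmin A = x :=
  le_antisymm (fmin_le hx) (h _ (fmin_mem ⟨x, hx⟩))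

lemma fmax_eq {A : Finset ℕ} {x : ℕ} (hx : x ∈ A) (h : ∀ y ∈ A, y ≤ x) : fmax A = x :=
  le_antisymm (h _ (fmax_mem ⟨x, hx⟩)) (le_fmax hx)

/-! ### Structure of linked partitions -/

variable {F : Finset ℕ} {π : Finset (Finset ℕ)}

/-- The connectivity relation used by `genPart`. -/
def relc (π : Finset (Finset ℕ)) (a b : ℕ) : Prop := ∃ A ∈ π, a ∈ A ∧ b ∈ A

lemma crossing_of {A B : Finset ℕ} (hA : A ∈ π) (hB : B ∈ π) (hAB : A ≠ B)
    {a b c d : ℕ} (ha : a ∈ A) (hb : b ∈ B) (hc : c ∈ A) (hd : d ∈ B)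
    (h1 : a < b) (h2 : b < c) (h3 : c < d) : IsCrossing π :=
  ⟨A, hA, B, hB, hAB, a, ha, b, hb, c, hc, d, hd, h1, h2, h3⟩

lemma shared (hL : IsLinkedPartitionOfSet F π) {A B : Finset ℕ} (hA : A ∈ π) (hB : B ∈ π)
    (hne : A ≠ B) {x : ℕ} (hxA : x ∈ A) (hxB : x ∈ B) :
    (x = fmin A ∧ fmin B < x) ∨ (x = fmin B ∧ fmin A < x) := by
  rcases hL.2.2.2 A hA B hB hne with h | ⟨_, _, _, hmm, hmem⟩
  · have : x ∈ A ∩ B := Finset.mem_inter.2 ⟨hxA, hxB⟩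
    rw [h] at this; exact absurd this (Finset.notMem_empty x)
  · rcases hmem x (Finset.mem_inter.2 ⟨hxA, hxB⟩) with h | h
    · refine Or.inl ⟨h, lt_of_le_of_ne (fmin_le hxB) ?_⟩
      intro e; exact hmm (by rw [← h, ← e])
    · refine Or.inr ⟨h, lt_of_le_of_ne (fmin_le hxA) ?_⟩
      intro e; exact hmm (by rw [← h, ← e])

lemma two_le_card_of_shared (hL : IsLinkedPartitionOfSet F π) {A B : Finset ℕ}
    (hA : A ∈ π) (hB : B ∈ π) (hne : A ≠ B) {x : ℕ} (hxA : x ∈ A) (hxB : x ∈ B) :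
    2 ≤ A.card := by
  rcases hL.2.2.2 A hA B hB hne with h | ⟨h2, _⟩
  · have : x ∈ A ∩ B := Finset.mem_inter.2 ⟨hxA, hxB⟩
    rw [h] at this; exact absurd this (Finset.notMem_empty x)
  · exact h2

lemma not_three (hL : IsLinkedPartitionOfSet F π) {P Q R : Finset ℕ}
    (hP : P ∈ π) (hQ : Q ∈ π) (hR : R ∈ π)
    (hPQ : P ≠ Q) (hPR : P ≠ R) (hQR : Q ≠ R) {m : ℕ}
    (hmP : m ∈ P) (hmQ : m ∈ Q) (hmR : m ∈ R) : False := by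
  rcases shared hL hP hQ hPQ hmP hmQ with ⟨h1, h1'⟩ | ⟨h1, h1'⟩ <;>
    rcases shared hL hP hR hPR hmP hmR with ⟨h2, h2'⟩ | ⟨h2, h2'⟩ <;>
      rcases shared hL hQ hR hQR hmQ hmR with ⟨h3, h3'⟩ | ⟨h3, h3'⟩ <;> omega

lemma eq_of_singly {m : ℕ} (hs : SinglyCovered π m) {A E : Finset ℕ} (hA : A ∈ π)
    (hE : E ∈ π) (hmA : m ∈ A) (hmE : m ∈ E) : A = E := by
  have hs' : (π.filter fun A => m ∈ A).card = 1 := hs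
  obtain ⟨X, hX⟩ := Finset.card_eq_one.1 hs'
  have h1 : A ∈ π.filter (fun A => m ∈ A) := Finset.mem_filter.2 ⟨hA, hmA⟩
  have h2 : E ∈ π.filter (fun A => m ∈ A) := Finset.mem_filter.2 ⟨hE, hmE⟩
  rw [hX, Finset.mem_singleton] at h1 h2
  rw [h1, h2]

lemma exists_partner {A : Finset ℕ} (hA : A ∈ π) {m : ℕ} (hmA : m ∈ A)
    (hns : ¬ SinglyCovered π m) : ∃ A' ∈ π, A' ≠ A ∧ m ∈ A' := by
  by_contra h
  push_neg at h
  apply hns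
  have hfe : π.filter (fun B => m ∈ B) = {A} := by
    apply Finset.eq_singleton_iff_unique_mem.2
    refine ⟨Finset.mem_filter.2 ⟨hA, hmA⟩, fun B hB => ?_⟩
    rcases Finset.mem_filter.1 hB with ⟨hB1, hB2⟩
    by_contra hne
    exact h B hB1 hne hB2
  show (π.filter fun B => m ∈ B).card = 1
  rw [hfe, Finset.card_singleton]

/-! ### Seal lemmas -/

lemma seal3 (hπ : IsNCLOfSet F π) {A : Finset ℕ} (hA : A ∈ π) {u v : ℕ}
    (hu : u ∈ A) (hv : v ∈ A)
    (hgap : ∀ a ∈ A, ¬(u < a ∧ a < v)) {E : Finset ℕ} (hE : E ∈ π) {y : ℕ}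
    (hy : y ∈ E) (hy1 : u < y) (hy2 : y < v) {z : ℕ} (hz : z ∈ E) :
    u ≤ z ∧ z ≤ v := by
  have hEA : E ≠ A := fun h => hgap y (h ▸ hy) ⟨hy1, hy2⟩
  constructor
  · by_contra h
    push_neg at h
    exact hπ.2 (crossing_of hE hA hEA hz hu hy hv h hy1 hy2)
  · by_contra h
    push_neg at h
    exact hπ.2 (crossing_of hA hE (Ne.symm hEA) hu hy hv hz hy1 hy2 h)

lemma sealOpen (hπ : IsNCLOfSet F π) {A : Finset ℕ} (hA : A ∈ π) {t : ℕ} (ht : t ∈ A)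
    (hmt : fmin A < t) (hgap : ∀ a ∈ A, ¬(fmin A < a ∧ a < t))
    {C : Finset ℕ} (hC : C ∈ π) {y : ℕ} (hy : y ∈ C) (hy1 : fmin A < y) (hy2 : y < t)
    {z : ℕ} (hz : z ∈ C) : fmin A < z ∧ z < t := by
  have hm0 : fmin A ∈ A := fmin_mem ⟨t, ht⟩
  have hCA : C ≠ A := fun h => hgap y (h ▸ hy) ⟨hy1, hy2⟩
  have hzc := seal3 hπ hA hm0 ht hgap hC hy hy1 hy2 hz
  rcases eq_or_lt_of_le hzc.1 with h1 | h1
  · exfalso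
    have hzC : fmin A ∈ C := by rw [h1]; exact hz
    have hfc := (seal3 hπ hA hm0 ht hgap hC hy hy1 hy2 (fmin_mem ⟨y, hy⟩)).1
    rcases shared hπ.1 hC hA hCA hzC hm0 with ⟨_, hlt⟩ | ⟨_, hlt⟩ <;> omega
  rcases eq_or_lt_of_le hzc.2 with h2 | h2
  · exfalso
    have htC : t ∈ C := by rw [← h2]; exact hz
    have hfy := fmin_le hy
    rcases shared hπ.1 hC hA hCA htC ht with ⟨he, hlt⟩ | ⟨he, hlt⟩ <;> omega
  exact ⟨h1, h2⟩

/-! ### Chains -/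

lemma relc_symm {a b : ℕ} (h : relc π a b) : relc π b a := by
  obtain ⟨A, hA, h1, h2⟩ := h; exact ⟨A, hA, h2, h1⟩

lemma rtg_symm {a b : ℕ} (h : Relation.ReflTransGen (relc π) a b) :
    Relation.ReflTransGen (relc π) b a := by
  induction h with
  | refl => exact .refl
  | tail _ h2 ih => exact Relation.ReflTransGen.head (relc_symm h2) ih

lemma eqvGen_to_rtg {a b : ℕ} (h : Relation.EqvGen (relc π) a b) :
    Relation.ReflTransGen (relc π) a b := by
  induction h with
  | rel x y h => exact Relation.ReflTransGen.single h
  | refl x => exact .refl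
  | symm x y _ ih => exact rtg_symm ih
  | trans x y z _ _ ih1 ih2 => exact ih1.trans ih2

lemma rtg_exit {α : Type*} {r : α → α → Prop} {S : Set α} {b : α} (hb : b ∉ S) :
    ∀ {a : α}, Relation.ReflTransGen r a b → a ∈ S →
    ∃ p q, Relation.ReflTransGen (fun x y => r x y ∧ x ∈ S ∧ y ∈ S) a p ∧
      r p q ∧ p ∈ S ∧ q ∉ S := by
  intro a h
  refine Relation.ReflTransGen.head_induction_on h ?_ ?_
  · exact fun ha => absurd ha hb
  · intro x c h' _ ih hx
    by_cases hc : c ∈ S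
    · obtain ⟨p, q, hp1, hp2, hp3, hp4⟩ := ih hc
      exact ⟨p, q, Relation.ReflTransGen.head ⟨h', hx, hc⟩ hp1, hp2, hp3, hp4⟩
    · exact ⟨x, c, Relation.ReflTransGen.refl, h', hx, hc⟩

/-! ### The two key component lemmas -/

/-- If `fmin A` is singly covered, every element of its connected component
is `≥ fmin A`. -/
lemma comp_le (hπ : IsNCLOfSet F π) {A : Finset ℕ} (hA : A ∈ π)
    (hs : SinglyCovered π (fmin A)) {x : ℕ}
    (hx : Relation.ReflTransGen (relc π) (fmin A) x) : fmin A ≤ x := by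
  by_contra hlt
  push_neg at hlt
  have hbS : x ∉ {z : ℕ | fmin A ≤ z} := by
    simp only [Set.mem_setOf_eq, not_le]; exact hlt
  obtain ⟨p, q, hreach, hpq, hpS, hqS⟩ :=
    rtg_exit (S := {z : ℕ | fmin A ≤ z}) hbS hx (le_refl (fmin A))
  obtain ⟨E, hE, hpE, hqE⟩ := hpq
  have hAne : A.Nonempty := hπ.1.1 A hA
  have hm0A : fmin A ∈ A := fmin_mem hAne
  simp only [Set.mem_setOf_eq, not_le] at hqS
  have hm0E : fmin A ∉ E := by
    intro hmem
    have hAE : A = E := eq_of_singly hs hA hE hm0A hmem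
    have : fmin A ≤ q := fmin_le (hAE ▸ hqE)
    omega
  have hpS' : fmin A ≤ p := hpS
  have hpgt : fmin A < p := by
    rcases eq_or_lt_of_le hpS' with h | h
    · exact absurd (h ▸ hpE) hm0E
    · exact h
  have hql : q ∈ E.filter (fun z => z < fmin A) := Finset.mem_filter.2 ⟨hqE, hqS⟩
  have hph : p ∈ E.filter (fun z => fmin A < z) := Finset.mem_filter.2 ⟨hpE, hpgt⟩
  set u := fmax (E.filter (fun z => z < fmin A)) with hu
  set v := fmin (E.filter (fun z => fmin A < z)) with hv
  have huE : u ∈ E ∧ u < fmin A := Finset.mem_filter.1 (fmax_mem ⟨q, hql⟩)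
  have hvE : v ∈ E ∧ fmin A < v := Finset.mem_filter.1 (fmin_mem ⟨p, hph⟩)
  have hule : ∀ a ∈ E, a < fmin A → a ≤ u := by
    intro a ha h
    have hmem : a ∈ E.filter (fun z => z < fmin A) := Finset.mem_filter.2 ⟨ha, h⟩
    exact le_fmax hmem
  have hvge : ∀ a ∈ E, fmin A < a → v ≤ a := by
    intro a ha h
    have hmem : a ∈ E.filter (fun z => fmin A < z) := Finset.mem_filter.2 ⟨ha, h⟩
    exact fmin_le hmem
  have hgap : ∀ a ∈ E, ¬ (u < a ∧ a < v) := by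
    rintro a haE ⟨h1, h2⟩
    rcases lt_trichotomy a (fmin A) with h | h | h
    · have := hule a haE h; omega
    · exact hm0E (h ▸ haE)
    · have := hvge a haE h; omega
  have hvp : v ≤ p := hvge p hpE hpgt
  have hm0uv : fmin A ∈ {z : ℕ | u < z ∧ z < v} := ⟨huE.2, hvE.2⟩
  have hpnot : p ∉ {z : ℕ | u < z ∧ z < v} := by
    simp only [Set.mem_setOf_eq, not_and, not_lt]
    intro _; exact hvp
  obtain ⟨p', q', _, hpq', hpS2, hqS2⟩ := rtg_exit hpnot hreach hm0uv
  obtain ⟨hrel', _, hq'S1⟩ := hpq'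
  obtain ⟨Fb, hFb, hp'F, hq'F⟩ := hrel'
  have hp'uv : u < p' ∧ p' < v := hpS2
  have hq'uv := seal3 hπ hE huE.1 hvE.1 hgap hFb hp'F hp'uv.1 hp'uv.2 hq'F
  simp only [Set.mem_setOf_eq, not_and, not_lt] at hqS2
  have hq'S1' : fmin A ≤ q' := hq'S1
  have hqv : q' = v := by
    rcases eq_or_lt_of_le hq'uv.1 with h | h
    · omega
    · have := hqS2 h; omega
  have hFE : Fb ≠ E := by
    intro he
    exact hgap p' (he ▸ hp'F) hp'uv
  have hvF : v ∈ Fb := hqv ▸ hq'F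
  have hfmp' := fmin_le hp'F
  have hfmq := fmin_le hqE
  rcases shared hπ.1 hFb hE hFE hvF hvE.1 with ⟨he, hlt⟩ | ⟨he, hlt⟩ <;> omega

/-- No element of the component of `fmin A` lies strictly between `fmin A` and
the next element `t` of `A`. -/
lemma comp_gap (hπ : IsNCLOfSet F π) {A : Finset ℕ} (hA : A ∈ π) {t : ℕ} (ht : t ∈ A)
    (hmt : fmin A < t) (hgap : ∀ a ∈ A, ¬(fmin A < a ∧ a < t)) {x : ℕ}
    (hx : Relation.ReflTransGen (relc π) (fmin A) x) : ¬ (fmin A < x ∧ x < t) := by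
  induction hx with
  | refl => omega
  | tail _ h2 ih =>
    rintro ⟨hx1, hx2⟩
    obtain ⟨C, hC, hbC, hcC⟩ := h2
    exact ih (sealOpen hπ hA ht hmt hgap hC hcC hx1 hx2 hbC)

/-! ### blockOf and genPart -/

lemma mem_ground {A : Finset ℕ} (hA : A ∈ π) {x : ℕ} (hx : x ∈ A) : x ∈ π.sup id :=
  Finset.le_sup (f := id) hA hx

lemma genPart_eq : genPart π = (π.sup id).image
    (fun m => (π.sup id).filter fun x => Relation.EqvGen (relc π) m x) := rfl

lemma blockOf_genPart {y : ℕ} (hy : y ∈ π.sup id) :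
    blockOf (genPart π) y =
      (π.sup id).filter (fun z => Relation.EqvGen (relc π) y z) := by
  have key : (genPart π).filter (fun V => y ∈ V) =
      {(π.sup id).filter (fun z => Relation.EqvGen (relc π) y z)} := by
    apply Finset.eq_singleton_iff_unique_mem.2
    constructor
    · refine Finset.mem_filter.2 ⟨?_, ?_⟩
      · rw [genPart_eq]
        exact Finset.mem_image.2 ⟨y, hy, rfl⟩
      · exact Finset.mem_filter.2 ⟨hy, Relation.EqvGen.refl y⟩
    · intro V hV
      rcases Finset.mem_filter.1 hV with ⟨hV1, hV2⟩
      rw [genPart_eq] at hV1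
      obtain ⟨m, _, rfl⟩ := Finset.mem_image.1 hV1
      have hmy : Relation.EqvGen (relc π) m y := (Finset.mem_filter.1 hV2).2
      ext z
      simp only [Finset.mem_filter, and_congr_right_iff]
      intro _
      constructor
      · intro hz; exact Relation.EqvGen.trans _ _ _ (Relation.EqvGen.symm _ _ hmy) hz
      · intro hz; exact Relation.EqvGen.trans _ _ _ hmy hz
  show ((genPart π).filter (fun V => y ∈ V)).sup id = _
  rw [key, Finset.sup_singleton]
  rfl

/-! ### Reconstruction -/

noncomputable def recon (g u : Finset (Finset ℕ)) : Finset (Finset ℕ) :=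
  u.image fun B =>
    if fmin B = fmin (blockOf g (fmin B)) then B
    else insert (fmax ((blockOf g (fmin B)).filter fun z => z < fmin B)) B

lemma recon_unlink (hπ : IsNCLOfSet F π) : recon (genPart π) (unlink π) = π := by
  have hmain : ∀ A ∈ π,
      (fun B => if fmin B = fmin (blockOf (genPart π) (fmin B)) then B
        else insert (fmax ((blockOf (genPart π) (fmin B)).filter fun z => z < fmin B)) B)
      ((fun A => if SinglyCovered π (fmin A) then A else A.erase (fmin A)) A) = A := by
    intro A hA
    have hAne : A.Nonempty := hπ.1.1 A hA
    have hm0A : fmin A ∈ A := fmin_mem hAne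
    have hm0G : fmin A ∈ π.sup id := mem_ground hA hm0A
    by_cases hs : SinglyCovered π (fmin A)
    · simp only [if_pos hs]
      have hcond : fmin A = fmin (blockOf (genPart π) (fmin A)) := by
        rw [blockOf_genPart hm0G]
        refine (fmin_eq (Finset.mem_filter.2 ⟨hm0G, Relation.EqvGen.refl _⟩) ?_).symm
        intro z hz
        exact comp_le hπ hA hs (eqvGen_to_rtg (Finset.mem_filter.1 hz).2)
      simp only [if_pos hcond]
    · simp only [if_neg hs]
      obtain ⟨A', hA', hneA, hm0A'⟩ := exists_partner hA hm0A hs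
      have h2A : 2 ≤ A.card := two_le_card_of_shared hπ.1 hA hA' (Ne.symm hneA) hm0A hm0A'
      have hBne : (A.erase (fmin A)).Nonempty := by
        rw [← Finset.card_pos, Finset.card_erase_of_mem hm0A]
        omega
      set t := fmin (A.erase (fmin A)) with htdef
      have htB : t ∈ A.erase (fmin A) := fmin_mem hBne
      have htA : t ∈ A := Finset.mem_of_mem_erase htB
      have htne : t ≠ fmin A := Finset.ne_of_mem_erase htB
      have hmt : fmin A < t := lt_of_le_of_ne (fmin_le htA) (Ne.symm htne)
      have hgapA : ∀ a ∈ A, ¬(fmin A < a ∧ a < t) := by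
        rintro a haA ⟨h1, h2⟩
        have : a ∈ A.erase (fmin A) := Finset.mem_erase.2 ⟨by omega, haA⟩
        exact absurd (fmin_le this) (not_le.2 h2)
      have htG : t ∈ π.sup id := mem_ground hA htA
      have hKt : blockOf (genPart π) t =
          (π.sup id).filter (fun z => Relation.EqvGen (relc π) t z) :=
        blockOf_genPart htG
      have hm0Kt : fmin A ∈ blockOf (genPart π) t := by
        rw [hKt]
        exact Finset.mem_filter.2 ⟨hm0G, Relation.EqvGen.rel _ _ ⟨A, hA, htA, hm0A⟩⟩
      have hcond : ¬ (t = fmin (blockOf (genPart π) t)) := by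
        have := fmin_le hm0Kt
        omega
      rw [if_neg hcond]
      have hmaxeq : fmax ((blockOf (genPart π) t).filter fun z => z < t) = fmin A := by
        refine fmax_eq ?_ ?_
        · exact Finset.mem_filter.2 ⟨hm0Kt, hmt⟩
        intro z hz
        rcases Finset.mem_filter.1 hz with ⟨hz1, hz2⟩
        rw [hKt] at hz1
        have hEz : Relation.EqvGen (relc π) (fmin A) z :=
          Relation.EqvGen.trans _ _ _
            (Relation.EqvGen.rel _ _ ⟨A, hA, hm0A, htA⟩) (Finset.mem_filter.1 hz1).2
        have := comp_gap hπ hA htA hmt hgapA (eqvGen_to_rtg hEz)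
        omega
      rw [hmaxeq, Finset.insert_erase hm0A]
  unfold recon unlink
  rw [Finset.image_image]
  refine Eq.trans (Finset.image_congr ?_) Finset.image_id
  intro A hA
  exact hmain A hA

end Stmt3Aux

/-- Let `π, ρ ∈ NCL(n)` be such that `π̂ = ρ̂` and `π̌ = ρ̌`.
Then `π = ρ`. -/
theorem stmt3 (n : ℕ) (π ρ : Finset (Finset ℕ)) (hπ : IsNCL n π) (hρ : IsNCL n ρ)
    (hgen : genPart π = genPart ρ) (hunl : unlink π = unlink ρ) :
    π = ρ := by
  have hπ' : IsNCLOfSet (Finset.Icc 1 n) π := hπ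
  have hρ' : IsNCLOfSet (Finset.Icc 1 n) ρ := hρ
  have h1 := Stmt3Aux.recon_unlink hπ'
  have h2 := Stmt3Aux.recon_unlink hρ'
  rw [← h1, hgen, hunl]
  exact h2
end

section
/- Let β = {W_1,…,W_q} be a partition in NC(n), and let β₀ ∈ NC(n) be the refinement of β in which every block W_j with |W_j| ≤ 2 is left intact, while every block W_j with |W_j| ≥ 3 is broken into the doubleton {min(W_j), max(W_j)} and |W_j| − 2 singletons. Then {α ∈ NC(n) : α ≪ β} = {α ∈ NC(n) : β₀ ≤ α ≤ β}. -/
open scoped Classical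

lemma fmin_mem {A : Finset ℕ} (h : A.Nonempty) : fmin A ∈ A := by
  have := Nat.sInf_mem (s := (A : Set ℕ)) (by exact_mod_cast h.to_set)
  exact_mod_cast this

lemma fmax_mem {A : Finset ℕ} (h : A.Nonempty) : fmax A ∈ A := by
  have := h.to_set.csSup_mem A.finite_toSet
  exact_mod_cast this

lemma fmin_le {A : Finset ℕ} {x : ℕ} (hx : x ∈ A) : fmin A ≤ x :=
  Nat.sInf_le (by exact_mod_cast hx)

lemma le_fmax {A : Finset ℕ} {x : ℕ} (hx : x ∈ A) : x ≤ fmax A :=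
  le_csSup (A.finite_toSet.bddAbove) (by exact_mod_cast hx)

lemma mem_of_card_le_two {A : Finset ℕ} {x : ℕ} (hc : A.card ≤ 2) (hx : x ∈ A) :
    x = fmin A ∨ x = fmax A := by
  by_contra h
  push_neg at h
  obtain ⟨h1, h2⟩ := h
  have hne : A.Nonempty := ⟨x, hx⟩
  have hmm : fmin A ≠ fmax A := by
    intro he
    have := le_antisymm (le_fmax hx) (he ▸ fmin_le hx)
    exact h2 this
  have hsub : ({fmin A, x, fmax A} : Finset ℕ) ⊆ A := by
    intro y hy
    simp only [Finset.mem_insert, Finset.mem_singleton] at hy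
    rcases hy with rfl | rfl | rfl
    · exact fmin_mem hne
    · exact hx
    · exact fmax_mem hne
  have hcard : ({fmin A, x, fmax A} : Finset ℕ).card = 3 :=
    Finset.card_eq_three.2 ⟨_, _, _, fun he => h1 he.symm, hmm, h2, rfl⟩
  have := Finset.card_le_card hsub
  omega

/-- Let `β ∈ NC(n)` and let `β₀` be the refinement of `β` breaking every
block `W` with `|W| ≥ 3` into `{min W, max W}` and `|W| - 2` singletons. Then
`{α ∈ NC(n) : α ≪ β} = {α ∈ NC(n) : β₀ ≤ α ≤ β}`. -/
theorem stmt4 (n : ℕ) (β : Finset (Finset ℕ)) (hβ : IsNCPartition n β) :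
    {α : Finset (Finset ℕ) | IsNCPartition n α ∧ LL α β}
      = {α : Finset (Finset ℕ) |
          IsNCPartition n α ∧ Refines (breakBlocks β) α ∧ Refines α β} := by
  obtain ⟨⟨hβne, hβsub, hβcov, _⟩, _⟩ := hβ
  ext α
  simp only [Set.mem_setOf_eq]
  constructor
  · rintro ⟨hα, hle, hmm⟩
    refine ⟨hα, ?_, hle⟩
    intro V hV
    rw [breakBlocks, Finset.mem_biUnion] at hV
    obtain ⟨W, hW, hVW⟩ := hV
    by_cases hc : W.card ≤ 2
    · rw [if_pos hc, Finset.mem_singleton] at hVW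
      subst hVW
      obtain ⟨V', hV', hmin, hmax⟩ := hmm V hW
      refine ⟨V', hV', fun x hx => ?_⟩
      rcases mem_of_card_le_two hc hx with rfl | rfl
      · exact hmin
      · exact hmax
    · rw [if_neg hc, Finset.mem_insert] at hVW
      rcases hVW with rfl | hVW
      · obtain ⟨V', hV', hmin, hmax⟩ := hmm W hW
        refine ⟨V', hV', ?_⟩
        intro y hy
        simp only [Finset.mem_insert, Finset.mem_singleton] at hy
        rcases hy with rfl | rfl
        · exact hmin
        · exact hmax
      · rw [Finset.mem_image] at hVW
        obtain ⟨x, hx, rfl⟩ := hVW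
        have hxF : x ∈ Finset.Icc 1 n := hβsub W hW (Finset.sdiff_subset hx)
        obtain ⟨V', hV', hxV'⟩ := hα.1.2.2.1 x hxF
        exact ⟨V', hV', Finset.singleton_subset_iff.2 hxV'⟩
  · rintro ⟨hα, h0, hle⟩
    refine ⟨hα, hle, ?_⟩
    intro W hW
    have hWne : W.Nonempty := hβne W hW
    by_cases hc : W.card ≤ 2
    · have hmem : W ∈ breakBlocks β := by
        rw [breakBlocks, Finset.mem_biUnion]
        exact ⟨W, hW, by rw [if_pos hc]; exact Finset.mem_singleton_self W⟩
      obtain ⟨V, hV, hsub⟩ := h0 W hmem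
      exact ⟨V, hV, hsub (fmin_mem hWne), hsub (fmax_mem hWne)⟩
    · have hmem : ({fmin W, fmax W} : Finset ℕ) ∈ breakBlocks β := by
        rw [breakBlocks, Finset.mem_biUnion]
        exact ⟨W, hW, by rw [if_neg hc]; exact Finset.mem_insert_self _ _⟩
      obtain ⟨V, hV, hsub⟩ := h0 _ hmem
      exact ⟨V, hV, hsub (Finset.mem_insert_self _ _),
        hsub (Finset.mem_insert_of_mem (Finset.mem_singleton_self _))⟩
end

section
/- Let n be a positive integer and let β = {W_1,…,W_q} be a partition in NC(n). The map π ↦ (π|_{W_1},…,π|_{W_q}) is a bijection from {π ∈ NCL(n) : π̂ = β} onto the product over j = 1,…,q of the sets {π_j ∈ NCL(W_j) : π̂_j = 1_{W_j}}, where 1_{W_j} is the partition of W_j into a single block. -/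
open scoped Classical

section Stmt9Helpers

/-- The "lie in a common block" relation of a family of blocks. -/
def lrel (π : Finset (Finset ℕ)) (a b : ℕ) : Prop := ∃ A ∈ π, a ∈ A ∧ b ∈ A

lemma genPart_def (π : Finset (Finset ℕ)) :
    genPart π = (π.sup id).image
      (fun m => (π.sup id).filter fun x => Relation.EqvGen (lrel π) m x) := rfl

lemma mem_sup_id {π : Finset (Finset ℕ)} {m : ℕ} :
    m ∈ π.sup id ↔ ∃ A ∈ π, m ∈ A := by
  simp [Finset.mem_sup]

lemma sup_id_eq {π : Finset (Finset ℕ)} {F : Finset ℕ}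
    (h1 : ∀ A ∈ π, A ⊆ F) (h2 : ∀ m ∈ F, ∃ A ∈ π, m ∈ A) : π.sup id = F := by
  apply Finset.Subset.antisymm
  · intro m hm
    rcases mem_sup_id.1 hm with ⟨A, hA, hmA⟩
    exact h1 A hA hmA
  · intro m hm
    exact mem_sup_id.2 (h2 m hm)

/-- If every block of `π` meeting `W` is contained in `W`, then the equivalence
generated by `lrel π` preserves membership in `W`, and within `W` it coincides with
the one generated by `lrel (restrictL π W)`. -/
lemma eqvgen_sat {π : Finset (Finset ℕ)} {W : Finset ℕ}
    (hsat : ∀ A ∈ π, ∀ x ∈ A, x ∈ W → A ⊆ W) :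
    ∀ a b, Relation.EqvGen (lrel π) a b →
      (a ∈ W ↔ b ∈ W) ∧ (a ∈ W → Relation.EqvGen (lrel (restrictL π W)) a b) := by
  intro a b h
  induction h with
  | rel a b hab =>
    obtain ⟨A, hA, ha, hb⟩ := hab
    refine ⟨⟨fun haW => hsat A hA a ha haW hb, fun hbW => hsat A hA b hb hbW ha⟩, ?_⟩
    intro haW
    exact Relation.EqvGen.rel _ _
      ⟨A, Finset.mem_filter.2 ⟨hA, hsat A hA a ha haW⟩, ha, hb⟩
  | refl a => exact ⟨Iff.rfl, fun _ => Relation.EqvGen.refl a⟩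
  | symm a b h ih =>
    exact ⟨ih.1.symm, fun hbW => Relation.EqvGen.symm _ _ (ih.2 (ih.1.2 hbW))⟩
  | trans a b c h1 h2 ih1 ih2 =>
    exact ⟨ih1.1.trans ih2.1,
      fun haW => Relation.EqvGen.trans _ _ _ (ih1.2 haW) (ih2.2 (ih1.1.1 haW))⟩

/-- Each generated block is saturated: a block of `π` meeting it is contained in it. -/
lemma sat_of_mem_genPart {π : Finset (Finset ℕ)} {W : Finset ℕ} (hW : W ∈ genPart π) :
    ∀ A ∈ π, ∀ x ∈ A, x ∈ W → A ⊆ W := by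
  rw [genPart_def] at hW
  rcases Finset.mem_image.1 hW with ⟨m, _, rfl⟩
  intro A hA x hx hxW b hb
  have hxe : Relation.EqvGen (lrel π) m x := (Finset.mem_filter.1 hxW).2
  have hbF : b ∈ π.sup id := mem_sup_id.2 ⟨A, hA, hb⟩
  exact Finset.mem_filter.2 ⟨hbF,
    Relation.EqvGen.trans _ _ _ hxe (Relation.EqvGen.rel _ _ ⟨A, hA, hx, hb⟩)⟩

/-- Every point of a generated block is covered by a block of `π` inside it. -/
lemma cover_of_mem_genPart {π : Finset (Finset ℕ)} {W : Finset ℕ} (hW : W ∈ genPart π) :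
    ∀ w ∈ W, ∃ A ∈ restrictL π W, w ∈ A := by
  intro w hw
  have hwF : w ∈ π.sup id := by
    rw [genPart_def] at hW
    rcases Finset.mem_image.1 hW with ⟨m, _, rfl⟩
    exact (Finset.mem_filter.1 hw).1
  rcases mem_sup_id.1 hwF with ⟨A, hA, hwA⟩
  exact ⟨A, Finset.mem_filter.2 ⟨hA, sat_of_mem_genPart hW A hA w hwA hw⟩, hwA⟩

/-- A criterion for computing `genPart π`. -/
lemma genPart_eq {π β : Finset (Finset ℕ)} {F : Finset ℕ}
    (hsup : π.sup id = F)
    (hcov : ∀ m ∈ F, ∃ W ∈ β, m ∈ W)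
    (hne : ∀ W ∈ β, ∃ m, m ∈ W ∧ m ∈ F)
    (hcomp : ∀ m ∈ F, ∀ W ∈ β, m ∈ W →
      (F.filter fun x => Relation.EqvGen (lrel π) m x) = W) :
    genPart π = β := by
  rw [genPart_def, hsup]
  apply Finset.ext
  intro X
  rw [Finset.mem_image]
  constructor
  · rintro ⟨m, hmF, rfl⟩
    rcases hcov m hmF with ⟨W, hWβ, hmW⟩
    rw [hcomp m hmF W hWβ hmW]; exact hWβ
  · intro hX
    rcases hne X hX with ⟨m, hmX, hmF⟩
    exact ⟨m, hmF, hcomp m hmF X hX hmX⟩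

/-- The generated partition of a restriction to a generated block is that block alone. -/
lemma genPart_restrict {π : Finset (Finset ℕ)} {W : Finset ℕ} (hW : W ∈ genPart π) :
    genPart (restrictL π W) = {W} := by
  have hsat := sat_of_mem_genPart hW
  have hsup : (restrictL π W).sup id = W :=
    sup_id_eq (fun A hA => (Finset.mem_filter.1 hA).2) (cover_of_mem_genPart hW)
  -- W is nonempty
  obtain ⟨m0, hm0sup, hm0eq⟩ : ∃ m0, m0 ∈ π.sup id ∧
      W = (π.sup id).filter fun x => Relation.EqvGen (lrel π) m0 x := by
    rw [genPart_def] at hW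
    rcases Finset.mem_image.1 hW with ⟨m, hm, h⟩
    exact ⟨m, hm, h.symm⟩
  have hm0W : m0 ∈ W := by
    rw [hm0eq]; exact Finset.mem_filter.2 ⟨hm0sup, Relation.EqvGen.refl m0⟩
  apply genPart_eq hsup (fun m hm => ⟨W, Finset.mem_singleton_self W, hm⟩)
    (fun V hV => by rw [Finset.mem_singleton] at hV; exact ⟨m0, hV ▸ hm0W, hV ▸ hm0W⟩)
  intro m hmW V hV hmV
  rw [Finset.mem_singleton] at hV
  subst hV
  apply Finset.Subset.antisymm (Finset.filter_subset _ _)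
  intro x hxW
  have hmx : Relation.EqvGen (lrel π) m x := by
    have h1 : Relation.EqvGen (lrel π) m0 m := by
      rw [hm0eq] at hmW; exact (Finset.mem_filter.1 hmW).2
    have h2 : Relation.EqvGen (lrel π) m0 x := by
      rw [hm0eq] at hxW; exact (Finset.mem_filter.1 hxW).2
    exact Relation.EqvGen.trans _ _ _ (Relation.EqvGen.symm _ _ h1) h2
  exact Finset.mem_filter.2 ⟨hxW, (eqvgen_sat hsat m x hmx).2 hmW⟩

end Stmt9Helpers

/-- Let `n` be a positive integer and `β = {W₁,…,W_q} ∈ NC(n)`. The map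
`π ↦ (π|_{W₁},…,π|_{W_q})` is a bijection from `{π ∈ NCL(n) : π̂ = β}` onto the product
over the blocks `W` of `β` of the sets `{π_W ∈ NCL(W) : π̂_W = 1_W}`. -/
theorem stmt9 (n : ℕ) (hn : 0 < n) (β : Finset (Finset ℕ)) (hβ : IsNCPartition n β) :
    Set.BijOn (fun π => fun W : {W : Finset ℕ // W ∈ β} => restrictL π W.1)
      {π : Finset (Finset ℕ) | IsNCL n π ∧ genPart π = β}
      {f : {W : Finset ℕ // W ∈ β} → Finset (Finset ℕ) |
        ∀ W, IsNCLOfSet W.1 (f W) ∧ genPart (f W) = {W.1}} := by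
  obtain ⟨⟨hβne, hβsub, hβcov, hβdisj⟩, hβnc⟩ := hβ
  have hβdisj' : ∀ (W W' : {W : Finset ℕ // W ∈ β}), W ≠ W' → W.1 ∩ W'.1 = ∅ := by
    intro W W' hne
    exact hβdisj W.1 W.2 W'.1 W'.2 (fun h => hne (Subtype.ext h))
  refine ⟨?_, ?_, ?_⟩
  · -- MapsTo
    intro π hπ
    obtain ⟨⟨⟨hne, hsub, hcov, hlink⟩, hnc⟩, hg⟩ := hπ
    intro W
    have hWg : W.1 ∈ genPart π := hg ▸ W.2
    have hres : restrictL π W.1 ⊆ π := Finset.filter_subset _ _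
    refine ⟨⟨⟨fun A hA => hne A (hres hA), fun A hA => (Finset.mem_filter.1 hA).2,
      cover_of_mem_genPart hWg, fun A hA B hB hAB => hlink A (hres hA) B (hres hB) hAB⟩,
      ?_⟩, genPart_restrict hWg⟩
    rintro ⟨A, hA, B, hB, hAB, a, ha, b, hb, c, hc, d, hd, h1, h2, h3⟩
    exact hnc ⟨A, hres hA, B, hres hB, hAB, a, ha, b, hb, c, hc, d, hd, h1, h2, h3⟩
  · -- InjOn
    have step : ∀ ρ ∈ {π : Finset (Finset ℕ) | IsNCL n π ∧ genPart π = β},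
        ∀ ρ' ∈ {π : Finset (Finset ℕ) | IsNCL n π ∧ genPart π = β},
        (fun W : {W : Finset ℕ // W ∈ β} => restrictL ρ W.1) =
          (fun W : {W : Finset ℕ // W ∈ β} => restrictL ρ' W.1) → ρ ⊆ ρ' := by
      intro ρ hρ ρ' hρ' heq A hA
      obtain ⟨a, ha⟩ := hρ.1.1.1 A hA
      have haF : a ∈ Finset.Icc 1 n := hρ.1.1.2.1 A hA ha
      obtain ⟨W, hWβ, haW⟩ := hβcov a haF
      have hWg : W ∈ genPart ρ := hρ.2 ▸ hWβ
      have hAW : A ⊆ W := sat_of_mem_genPart hWg A hA a ha haW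
      have h1 : A ∈ restrictL ρ W := Finset.mem_filter.2 ⟨hA, hAW⟩
      have h2 := congrFun heq ⟨W, hWβ⟩
      simp only at h2
      rw [h2] at h1
      exact (Finset.mem_filter.1 h1).1
    intro ρ hρ ρ' hρ' heq
    exact Finset.Subset.antisymm (step ρ hρ ρ' hρ' heq) (step ρ' hρ' ρ hρ heq.symm)
  · -- SurjOn
    intro f hf
    simp only [Set.mem_setOf_eq] at hf
    set π : Finset (Finset ℕ) := β.attach.biUnion (fun W => f W) with hπdef
    have hmem : ∀ {A : Finset ℕ}, A ∈ π ↔ ∃ W, A ∈ f W := by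
      intro A; simp [hπdef, Finset.mem_biUnion]
    have hsubW : ∀ (W : {W : Finset ℕ // W ∈ β}) A, A ∈ f W → A ⊆ W.1 :=
      fun W => (hf W).1.1.2.1
    have hneW : ∀ (W : {W : Finset ℕ // W ∈ β}) A, A ∈ f W → A.Nonempty :=
      fun W => (hf W).1.1.1
    have hcovW : ∀ (W : {W : Finset ℕ // W ∈ β}), ∀ m ∈ W.1, ∃ A ∈ f W, m ∈ A :=
      fun W => (hf W).1.1.2.2.1
    have key : ∀ (W W' : {W : Finset ℕ // W ∈ β}) A, A ∈ f W → (A ∩ W'.1).Nonempty →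
        W = W' := by
      intro W W' A hA ⟨x, hx⟩
      by_contra hne
      have h0 := hβdisj' W W' hne
      have : x ∈ W.1 ∩ W'.1 :=
        Finset.mem_inter.2 ⟨hsubW W A hA (Finset.mem_inter.1 hx).1, (Finset.mem_inter.1 hx).2⟩
      rw [h0] at this
      exact absurd this (Finset.notMem_empty x)
    have hrestr : ∀ (W : {W : Finset ℕ // W ∈ β}), restrictL π W.1 = f W := by
      intro W
      apply Finset.ext
      intro A
      rw [restrictL, Finset.mem_filter]
      constructor
      · rintro ⟨hAπ, hAW⟩
        obtain ⟨W', hAW'⟩ := hmem.1 hAπ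
        obtain ⟨a, ha⟩ := hneW W' A hAW'
        have : W' = W := key W' W A hAW' ⟨a, Finset.mem_inter.2 ⟨ha, hAW ha⟩⟩
        exact this ▸ hAW'
      · intro hA
        exact ⟨hmem.2 ⟨W, hA⟩, hsubW W A hA⟩
    have hsupW : ∀ (W : {W : Finset ℕ // W ∈ β}), (f W).sup id = W.1 :=
      fun W => sup_id_eq (hsubW W) (hcovW W)
    have hcompW : ∀ (W : {W : Finset ℕ // W ∈ β}), ∀ m ∈ W.1, ∀ x ∈ W.1,
        Relation.EqvGen (lrel (f W)) m x := by
      intro W m hm x hx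
      have h0 := (hf W).2
      rw [genPart_def, hsupW W] at h0
      have h1 := Finset.mem_image_of_mem
        (fun m => W.1.filter fun x => Relation.EqvGen (lrel (f W)) m x) hm
      rw [h0, Finset.mem_singleton] at h1
      have := hx
      rw [← h1] at this
      exact (Finset.mem_filter.1 this).2
    have hsat : ∀ (W : {W : Finset ℕ // W ∈ β}), ∀ A ∈ π, ∀ x ∈ A, x ∈ W.1 → A ⊆ W.1 := by
      intro W A hA x hx hxW
      obtain ⟨W', hAW'⟩ := hmem.1 hA
      have : W' = W := key W' W A hAW' ⟨x, Finset.mem_inter.2 ⟨hx, hxW⟩⟩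
      exact this ▸ hsubW W' A hAW'
    have hsupπ : π.sup id = Finset.Icc 1 n := by
      apply sup_id_eq
      · intro A hA
        obtain ⟨W, hAW⟩ := hmem.1 hA
        exact (hsubW W A hAW).trans (hβsub W.1 W.2)
      · intro m hm
        obtain ⟨W, hWβ, hmW⟩ := hβcov m hm
        obtain ⟨A, hA, hmA⟩ := hcovW ⟨W, hWβ⟩ m hmW
        exact ⟨A, hmem.2 ⟨⟨W, hWβ⟩, hA⟩, hmA⟩
    have hgen : genPart π = β := by
      apply genPart_eq hsupπ hβcov
      · intro W hW
        obtain ⟨m, hm⟩ := hβne W hW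
        exact ⟨m, hm, hβsub W hW hm⟩
      · intro m hmF W0 hW0 hmW0
        apply Finset.Subset.antisymm
        · intro x hx
          obtain ⟨hxF, hmx⟩ := Finset.mem_filter.1 hx
          exact (eqvgen_sat (hsat ⟨W0, hW0⟩) m x hmx).1.1 hmW0
        · intro x hxW0
          refine Finset.mem_filter.2 ⟨hβsub W0 hW0 hxW0, ?_⟩
          refine Relation.EqvGen.mono ?_ _ _ (hcompW ⟨W0, hW0⟩ m hmW0 x hxW0)
          rintro a b ⟨A, hA, hab⟩
          exact ⟨A, hmem.2 ⟨⟨W0, hW0⟩, hA⟩, hab⟩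
    have hNCL : IsNCL n π := by
      refine ⟨⟨?_, ?_, ?_, ?_⟩, ?_⟩
      · intro A hA
        obtain ⟨W, hAW⟩ := hmem.1 hA
        exact hneW W A hAW
      · intro A hA
        obtain ⟨W, hAW⟩ := hmem.1 hA
        exact (hsubW W A hAW).trans (hβsub W.1 W.2)
      · intro m hm
        obtain ⟨W, hWβ, hmW⟩ := hβcov m hm
        obtain ⟨A, hA, hmA⟩ := hcovW ⟨W, hWβ⟩ m hmW
        exact ⟨A, hmem.2 ⟨⟨W, hWβ⟩, hA⟩, hmA⟩
      · intro A hA B hB hAB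
        obtain ⟨W, hAW⟩ := hmem.1 hA
        obtain ⟨W', hBW'⟩ := hmem.1 hB
        by_cases hWW' : W = W'
        · subst hWW'
          exact (hf W).1.1.2.2.2 A hAW B hBW' hAB
        · left
          apply Finset.eq_empty_of_forall_notMem
          intro x hx
          have h0 := hβdisj' W W' hWW'
          have : x ∈ W.1 ∩ W'.1 := Finset.mem_inter.2
            ⟨hsubW W A hAW (Finset.mem_inter.1 hx).1,
             hsubW W' B hBW' (Finset.mem_inter.1 hx).2⟩
          rw [h0] at this
          exact Finset.notMem_empty x this
      · rintro ⟨A, hA, B, hB, hAB, a, ha, b, hb, c, hc, d, hd, h1, h2, h3⟩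
        obtain ⟨W, hAW⟩ := hmem.1 hA
        obtain ⟨W', hBW'⟩ := hmem.1 hB
        by_cases hWW' : W = W'
        · subst hWW'
          exact (hf W).1.2 ⟨A, hAW, B, hBW', hAB, a, ha, b, hb, c, hc, d, hd, h1, h2, h3⟩
        · exact hβnc ⟨W.1, W.2, W'.1, W'.2, fun h => hWW' (Subtype.ext h),
            a, hsubW W A hAW ha, b, hsubW W' B hBW' hb,
            c, hsubW W A hAW hc, d, hsubW W' B hBW' hd, h1, h2, h3⟩
    exact ⟨π, ⟨hNCL, hgen⟩, funext fun W => hrestr W⟩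
end
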